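/- arXiv:1007.4553 — 2 statements merged into one kernel-verified Lean document; each statement's English description precedes it below -/
import Mathlib

section
/- Let 1 ≤ p < ∞, let Y be a Banach space, and let ι : Y → L^p(𝕋) be a compact continuous linear operator (a compact embedding of Y into L^p of the circle). Then there exists a sequence (εₙ)ₙ∈ℤ of positive reals, decreasing to 0 as |n| → ∞, such that |cₙ(ι(y))| ≤ ε_{|n|} · ‖y‖_Y for every n ∈ ℤ and every y ∈ Y, where cₙ(f) = (1/2π)∫₀^{2π} f(t) e^{−int} dt is the n-th Fourier coefficient. -/
open MeasureTheory AddCircle Filter Topology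

namespace FourierDecayAux

variable {T : ℝ} [hT : Fact (0 < T)]

lemma norm_fourier_apply (n : ℤ) (x : AddCircle T) : ‖fourier n x‖ = 1 := by
  rw [fourier_apply]; exact Circle.norm_coe _

lemma fourierCoeff_congr_ae {f g : AddCircle T → ℂ}
    (h : f =ᵐ[haarAddCircle] g) (n : ℤ) : fourierCoeff f n = fourierCoeff g n :=
  integral_congr_ae (h.mono fun x hx => by simp [hx])

lemma integrable_fourier_smul {f : AddCircle T → ℂ}
    (hf : Integrable f haarAddCircle) (n : ℤ) :
    Integrable (fun x => fourier n x • f x) haarAddCircle := by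
  simpa [smul_eq_mul] using hf.bdd_mul (map_continuous (fourier n)).aestronglyMeasurable
    (Filter.Eventually.of_forall fun x => le_of_eq (norm_fourier_apply _ _))

lemma fourierCoeff_add {f g : AddCircle T → ℂ}
    (hf : Integrable f haarAddCircle) (hg : Integrable g haarAddCircle) (n : ℤ) :
    fourierCoeff (f + g) n = fourierCoeff f n + fourierCoeff g n := by
  simp only [fourierCoeff, Pi.add_apply, smul_add]
  exact integral_add (integrable_fourier_smul hf _) (integrable_fourier_smul hg _)

variable {p : ENNReal} [Fact (1 ≤ p)]

lemma lp_integrable (f : Lp ℂ p (@haarAddCircle T hT)) :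
    Integrable (⇑f) haarAddCircle :=
  (Lp.memLp f).integrable Fact.out

lemma norm_fourierCoeff_le (f : Lp ℂ p (@haarAddCircle T hT)) (n : ℤ) :
    ‖fourierCoeff (⇑f) n‖ ≤ ‖f‖ := by
  have hint := lp_integrable f
  have h1 : ‖fourierCoeff (⇑f) n‖ ≤ ∫ x, ‖f x‖ ∂(@haarAddCircle T hT) := by
    refine (norm_integral_le_integral_norm _).trans (le_of_eq ?_)
    congr 1; ext x; rw [norm_smul, norm_fourier_apply, one_mul]
  refine h1.trans ?_
  have h2 : ∫ x, ‖f x‖ ∂(@haarAddCircle T hT) = (eLpNorm (⇑f) 1 haarAddCircle).toReal := by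
    rw [integral_norm_eq_lintegral_enorm (Lp.aestronglyMeasurable f),
      eLpNorm_one_eq_lintegral_enorm]
  rw [h2, Lp.norm_def]
  exact ENNReal.toReal_mono (Lp.eLpNorm_ne_top f)
    (eLpNorm_le_eLpNorm_of_exponent_le Fact.out (Lp.aestronglyMeasurable f))

lemma fourierCoeff_lp_sub (f g : Lp ℂ p (@haarAddCircle T hT)) (n : ℤ) :
    ‖fourierCoeff (⇑f) n - fourierCoeff (⇑g) n‖ ≤ ‖f - g‖ := by
  have h1 : fourierCoeff (⇑(f - g)) n = fourierCoeff (⇑f) n - fourierCoeff (⇑g) n := by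
    rw [fourierCoeff_congr_ae (Lp.coeFn_sub f g)]
    have : (⇑f - ⇑g : AddCircle T → ℂ) = ⇑f + (-⇑g) := by ext x; simp [sub_eq_add_neg]
    rw [this, fourierCoeff_add (lp_integrable f) (lp_integrable g).neg]
    have : fourierCoeff (-⇑g : AddCircle T → ℂ) n = -fourierCoeff (⇑g) n := by
      have := fourierCoeff.const_smul (⇑g) (-1 : ℂ) n
      simpa using this
    rw [this]; ring
  rw [← h1]; exact norm_fourierCoeff_le _ _

lemma fourierCoeff_lp_smul (c : ℂ) (f : Lp ℂ p (@haarAddCircle T hT)) (n : ℤ) :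
    fourierCoeff (⇑(c • f)) n = c • fourierCoeff (⇑f) n := by
  rw [fourierCoeff_congr_ae (Lp.coeFn_smul c f)]
  exact fourierCoeff.const_smul _ _ _

lemma fourierCoeff_fourier_of_ne {m n : ℤ} (h : n ≠ m) :
    fourierCoeff (⇑(@fourier T m)) n = 0 := by
  classical
  have h1 : fourierCoeff (⇑(@fourier T m)) n
      = fourierCoeff (⇑(@fourierLp T hT 2 _ m)) n :=
    (fourierCoeff_congr_ae (coeFn_fourierLp 2 m) n).symm
  rw [h1, ← fourierBasis_repr, ← coe_fourierBasis, HilbertBasis.repr_self,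
    lp.single_apply]
  simp [h]

/-- Riemann–Lebesgue on the circle for `Lp` functions. -/
lemma riemann_lebesgue (hp : p ≠ ⊤) (f : Lp ℂ p (@haarAddCircle T hT))
    {δ : ℝ} (hδ : 0 < δ) :
    ∃ N : ℕ, ∀ n : ℤ, N ≤ n.natAbs → ‖fourierCoeff (⇑f) n‖ ≤ δ := by
  classical
  have hdense := span_fourierLp_closure_eq_top (T := T) (p := p) hp
  have hf : f ∈ (Submodule.span ℂ (Set.range (@fourierLp T hT p _))).topologicalClosure := by
    rw [hdense]; trivial
  have hf' : f ∈ closure ((Submodule.span ℂ (Set.range (@fourierLp T hT p _)) : Submodule ℂ _) : Set (Lp ℂ p (@haarAddCircle T hT))) := hf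
  obtain ⟨g, hg_mem, hg_dist⟩ := Metric.mem_closure_iff.mp hf' δ hδ
  have hP : ∃ N : ℕ, ∀ n : ℤ, N ≤ n.natAbs → fourierCoeff (⇑g) n = 0 := by
    refine Submodule.span_induction (p := fun (h : Lp ℂ p (@haarAddCircle T hT)) _ => ∃ N : ℕ, ∀ n : ℤ,
      N ≤ n.natAbs → fourierCoeff (⇑h) n = 0) ?_ ?_ ?_ ?_ hg_mem
    · rintro x ⟨m, rfl⟩
      refine ⟨m.natAbs + 1, fun n hn => ?_⟩
      have hnm : n ≠ m := by
        intro h; rw [h] at hn; omega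
      rw [fourierCoeff_congr_ae (coeFn_fourierLp p m)]
      exact fourierCoeff_fourier_of_ne hnm
    · exact ⟨0, fun n _ => by
        rw [fourierCoeff_congr_ae (Lp.coeFn_zero ℂ p (@haarAddCircle T hT))]
        simp [fourierCoeff]⟩
    · rintro x y hx hy ⟨Nx, hNx⟩ ⟨Ny, hNy⟩
      refine ⟨max Nx Ny, fun n hn => ?_⟩
      rw [fourierCoeff_congr_ae (Lp.coeFn_add x y),
        fourierCoeff_add (lp_integrable x) (lp_integrable y),
        hNx n (le_trans (le_max_left _ _) hn), hNy n (le_trans (le_max_right _ _) hn),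
        add_zero]
    · rintro c x hx ⟨N, hN⟩
      refine ⟨N, fun n hn => ?_⟩
      rw [fourierCoeff_lp_smul, hN n hn, smul_zero]
  obtain ⟨N, hN⟩ := hP
  refine ⟨N, fun n hn => ?_⟩
  have := fourierCoeff_lp_sub f g n
  rw [hN n hn, sub_zero] at this
  refine this.trans ?_
  rw [← dist_eq_norm]
  exact hg_dist.le

lemma uniform_decay (hp : p ≠ ⊤) {Y : Type} [NormedAddCommGroup Y] [NormedSpace ℂ Y]
    (ι : Y →L[ℂ] Lp ℂ p (@haarAddCircle T hT)) (hι : IsCompactOperator ι)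
    {δ : ℝ} (hδ : 0 < δ) :
    ∃ N : ℕ, ∀ n : ℤ, N ≤ n.natAbs → ∀ y : Y, ‖y‖ ≤ 1 →
      ‖fourierCoeff (⇑(ι y)) n‖ ≤ δ := by
  classical
  have hK : IsCompact (closure (⇑ι '' Metric.closedBall 0 1)) :=
    IsCompactOperator.isCompact_closure_image_closedBall
      (f := (ι : Y →ₗ[ℂ] Lp ℂ p (@haarAddCircle T hT))) hι 1
  obtain ⟨t, htfin, htcov⟩ :=
    Metric.totallyBounded_iff.mp hK.totallyBounded (δ / 2) (by positivity)
  choose Nf hNf using fun x : Lp ℂ p (@haarAddCircle T hT) =>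
    riemann_lebesgue hp x (half_pos hδ)
  refine ⟨htfin.toFinset.sup Nf, fun n hn y hy => ?_⟩
  have hmem : ι y ∈ closure (⇑ι '' Metric.closedBall 0 1) :=
    subset_closure ⟨y, by simpa [Metric.mem_closedBall, dist_zero_right] using hy, rfl⟩
  obtain ⟨x, hx, hball⟩ := Set.mem_iUnion₂.mp (htcov hmem)
  have h1 : ‖fourierCoeff (⇑(ι y)) n - fourierCoeff (⇑x) n‖ ≤ ‖ι y - x‖ :=
    fourierCoeff_lp_sub _ _ _
  have h2 : ‖ι y - x‖ < δ / 2 := by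
    rw [← dist_eq_norm]; exact Metric.mem_ball.mp hball
  have h3 : ‖fourierCoeff (⇑x) n‖ ≤ δ / 2 :=
    hNf x n (le_trans (Finset.le_sup (htfin.mem_toFinset.mpr hx)) hn)
  calc ‖fourierCoeff (⇑(ι y)) n‖
      = ‖(fourierCoeff (⇑(ι y)) n - fourierCoeff (⇑x) n) + fourierCoeff (⇑x) n‖ := by
        ring_nf
    _ ≤ ‖fourierCoeff (⇑(ι y)) n - fourierCoeff (⇑x) n‖ + ‖fourierCoeff (⇑x) n‖ :=
        norm_add_le _ _
    _ ≤ δ / 2 + δ / 2 := add_le_add (h1.trans h2.le) h3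
    _ = δ := by ring

end FourierDecayAux

open FourierDecayAux

local instance : Fact (0 < 2 * Real.pi) := ⟨by positivity⟩

theorem fourier_coefficients_uniform_decay_on_compact_embedding
    (p : ENNReal) [Fact (1 ≤ p)] (hp : p ≠ ⊤)
    {Y : Type} [NormedAddCommGroup Y] [NormedSpace ℂ Y] [CompleteSpace Y]
    (ι : Y →L[ℂ] Lp ℂ p (@haarAddCircle (2 * Real.pi) _))
    (hι : IsCompactOperator ι) :
    ∃ ε : ℕ → ℝ, (∀ n, 0 < ε n) ∧ Antitone ε ∧ Tendsto ε atTop (𝓝 0) ∧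
      ∀ (n : ℤ) (y : Y), ‖fourierCoeff (⇑(ι y)) n‖ ≤ ε n.natAbs * ‖y‖ := by
  classical
  set S : ℕ → Set ℝ := fun N =>
    (fun q : ℤ × Y => ‖fourierCoeff (⇑(ι q.2)) q.1‖) ''
      {q : ℤ × Y | N ≤ q.1.natAbs ∧ ‖q.2‖ ≤ 1} with hS
  have hwit : ∀ N : ℕ, ‖fourierCoeff (⇑(ι (0 : Y))) (N : ℤ)‖ ∈ S N := by
    intro N
    exact ⟨((N : ℤ), (0 : Y)), ⟨by simp, by simp⟩, rfl⟩
  have hne : ∀ N, (S N).Nonempty := fun N => ⟨_, hwit N⟩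
  have hbdd : ∀ N, BddAbove (S N) := by
    intro N
    refine ⟨‖ι‖, ?_⟩
    rintro r ⟨⟨n, y⟩, ⟨-, hy⟩, rfl⟩
    refine (norm_fourierCoeff_le _ _).trans ((ι.le_opNorm y).trans ?_)
    have h := mul_le_mul_of_nonneg_left hy (norm_nonneg ι)
    simpa using h
  set s : ℕ → ℝ := fun N => sSup (S N) with hs
  have hs_nonneg : ∀ N, 0 ≤ s N := fun N =>
    le_trans (norm_nonneg _) (le_csSup (hbdd N) (hwit N))
  have hs_anti : Antitone s := by
    intro a b hab
    refine csSup_le_csSup (hbdd a) (hne b) ?_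
    rintro r ⟨q, ⟨hq1, hq2⟩, rfl⟩
    exact ⟨q, ⟨le_trans hab hq1, hq2⟩, rfl⟩
  have hs_le : ∀ {δ : ℝ}, 0 < δ → ∃ N₀, ∀ N, N₀ ≤ N → s N ≤ δ := by
    intro δ hδ
    obtain ⟨N₀, hN₀⟩ := uniform_decay hp ι hι hδ
    refine ⟨N₀, fun N hN => csSup_le (hne N) ?_⟩
    rintro r ⟨⟨n, y⟩, ⟨hn, hy⟩, rfl⟩
    exact hN₀ n (le_trans hN hn) y hy
  have hs_tendsto : Tendsto s atTop (𝓝 0) := by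
    rw [Metric.tendsto_atTop]
    intro δ hδ
    obtain ⟨N₀, hN₀⟩ := hs_le (half_pos hδ)
    refine ⟨N₀, fun N hN => ?_⟩
    rw [Real.dist_eq, sub_zero, abs_of_nonneg (hs_nonneg N)]
    exact lt_of_le_of_lt (hN₀ N hN) (half_lt_self hδ)
  refine ⟨fun n => s n + ((n : ℝ) + 1)⁻¹, fun n => ?_, ?_, ?_, ?_⟩
  · have : (0 : ℝ) < ((n : ℝ) + 1)⁻¹ := by positivity
    linarith [hs_nonneg n]
  · intro a b hab
    have h1 : ((b : ℝ) + 1)⁻¹ ≤ ((a : ℝ) + 1)⁻¹ := by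
      have hab' : (a : ℝ) ≤ b := Nat.cast_le.mpr hab
      apply inv_anti₀ (by positivity)
      linarith
    exact add_le_add (hs_anti hab) h1
  · have h2 : Tendsto (fun n : ℕ => ((n : ℝ) + 1)⁻¹) atTop (𝓝 0) := by
      simpa [one_div] using tendsto_one_div_add_atTop_nhds_zero_nat (𝕜 := ℝ)
    simpa using hs_tendsto.add h2
  · intro n y
    rcases eq_or_ne y 0 with rfl | hy
    · simp only [map_zero, norm_zero, mul_zero]
      rw [FourierDecayAux.fourierCoeff_congr_ae (Lp.coeFn_zero ℂ p (@haarAddCircle (2 * Real.pi) _))]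
      simp [fourierCoeff]
    · have hy' : (0 : ℝ) < ‖y‖ := norm_pos_iff.mpr hy
      set z : Y := ((‖y‖ : ℂ))⁻¹ • y with hz
      have hznorm : ‖z‖ ≤ 1 := by
        rw [hz, norm_smul]
        simp [norm_inv, Complex.norm_real, norm_norm, inv_mul_cancel₀ hy'.ne']
      have hmem : ‖fourierCoeff (⇑(ι z)) n‖ ∈ S n.natAbs :=
        ⟨(n, z), ⟨le_refl _, hznorm⟩, rfl⟩
      have hle : ‖fourierCoeff (⇑(ι z)) n‖ ≤ s n.natAbs := le_csSup (hbdd _) hmem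
      have hsmul : fourierCoeff (⇑(ι z)) n = ((‖y‖ : ℂ))⁻¹ • fourierCoeff (⇑(ι y)) n := by
        rw [hz, ContinuousLinearMap.map_smul]
        exact fourierCoeff_lp_smul _ _ _
      have hnorm : ‖fourierCoeff (⇑(ι z)) n‖ = ‖y‖⁻¹ * ‖fourierCoeff (⇑(ι y)) n‖ := by
        rw [hsmul, norm_smul, norm_inv, Complex.norm_real, norm_norm]
      have key : ‖fourierCoeff (⇑(ι y)) n‖ ≤ s n.natAbs * ‖y‖ := by
        rw [hnorm] at hle
        calc ‖fourierCoeff (⇑(ι y)) n‖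
            = (‖y‖⁻¹ * ‖fourierCoeff (⇑(ι y)) n‖) * ‖y‖ := by
              field_simp
          _ ≤ s n.natAbs * ‖y‖ := mul_le_mul_of_nonneg_right hle hy'.le
      refine key.trans ?_
      have : (0 : ℝ) ≤ ((n.natAbs : ℝ) + 1)⁻¹ := by positivity
      nlinarith [hy'.le]
end

section
/- Let H be a Hilbert space over ℂ and let (φₙ)ₙ∈ℕ be a frame for H with frame constants A, B > 0, i.e., A‖x‖² ≤ Σₙ |⟨x, φₙ⟩|² ≤ B‖x‖² for all x ∈ H. Let Y be a Banach space and let ι : Y → H be a compact continuous linear operator (a compact embedding of Y into H). Then there exists a sequence (εₙ) of positive reals decreasing to 0 such that |⟨ι(y), φₙ⟩| ≤ εₙ · ‖y‖_Y for every n ∈ ℕ and every y ∈ Y. -/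
open Filter Topology

local notation "⟪" x ", " y "⟫" => @inner ℂ _ _ x y

/-- If a nonnegative sequence tends to zero, there is a *positive, antitone* sequence
tending to zero dominating it. -/
lemma exists_antitone_dominating (g : ℕ → ℝ) (hg0 : ∀ n, 0 ≤ g n)
    (hg : Tendsto g atTop (𝓝 0)) :
    ∃ ε : ℕ → ℝ, (∀ n, 0 < ε n) ∧ Antitone ε ∧ Tendsto ε atTop (𝓝 0) ∧ ∀ n, g n ≤ ε n := by
  have hbdd : BddAbove (Set.range g) := hg.bddAbove_range
  set s : ℕ → ℝ := fun n => sSup (g '' Set.Ici n) with hs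
  have hne : ∀ n, (g '' Set.Ici n).Nonempty := fun n => ⟨g n, n, le_refl n, rfl⟩
  have hbdd' : ∀ n, BddAbove (g '' Set.Ici n) := fun n =>
    hbdd.mono (Set.image_subset_range g (Set.Ici n))
  have hle : ∀ n, g n ≤ s n := fun n => le_csSup (hbdd' n) ⟨n, le_refl n, rfl⟩
  have hs0 : ∀ n, 0 ≤ s n := fun n => le_trans (hg0 n) (hle n)
  have hanti : Antitone s := fun m n hmn =>
    csSup_le_csSup (hbdd' m) (hne n) (Set.image_mono (Set.Ici_subset_Ici.mpr hmn))
  have hstend : Tendsto s atTop (𝓝 0) := by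
    rw [Metric.tendsto_atTop] at hg ⊢
    intro δ hδ
    obtain ⟨N, hN⟩ := hg (δ / 2) (half_pos hδ)
    refine ⟨N, fun n hn => ?_⟩
    have hsle : s n ≤ δ / 2 := by
      refine csSup_le (hne n) ?_
      rintro x ⟨m, hm, rfl⟩
      have := hN m (le_trans hn hm)
      rw [Real.dist_eq, sub_zero] at this
      exact le_of_lt (lt_of_abs_lt this)
    rw [Real.dist_eq, sub_zero, abs_of_nonneg (hs0 n)]
    linarith
  refine ⟨fun n => s n + 1 / (n + 1 : ℝ), fun n => ?_, ?_, ?_, fun n => ?_⟩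
  · have : (0 : ℝ) < 1 / (n + 1 : ℝ) := by positivity
    linarith [hs0 n]
  · intro m n hmn
    have h1 : (1 : ℝ) / (n + 1) ≤ 1 / (m + 1) := by
      apply one_div_le_one_div_of_le (by positivity)
      exact_mod_cast Nat.succ_le_succ hmn
    have h2 := hanti hmn
    dsimp only
    linarith
  · have h := hstend.add tendsto_one_div_add_atTop_nhds_zero_nat
    simpa using h
  · have : (0 : ℝ) < 1 / (n + 1 : ℝ) := by positivity
    linarith [hle n]

theorem frame_coefficients_uniform_decay_on_compact_embedding
    {H Y : Type*} [NormedAddCommGroup H] [InnerProductSpace ℂ H] [CompleteSpace H]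
    [NormedAddCommGroup Y] [NormedSpace ℂ Y] [CompleteSpace Y]
    (φ : ℕ → H) (A B : ℝ) (hA : 0 < A) (hB : 0 < B)
    (hsum : ∀ x : H, Summable (fun n => ‖⟪x, φ n⟫‖ ^ 2))
    (hframe : ∀ x : H,
      A * ‖x‖ ^ 2 ≤ ∑' n : ℕ, ‖⟪x, φ n⟫‖ ^ 2 ∧
      ∑' n : ℕ, ‖⟪x, φ n⟫‖ ^ 2 ≤ B * ‖x‖ ^ 2)
    (ι : Y →L[ℂ] H) (hι : IsCompactOperator ι) :
    ∃ ε : ℕ → ℝ, (∀ n, 0 < ε n) ∧ Antitone ε ∧ Tendsto ε atTop (𝓝 0) ∧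
      ∀ (n : ℕ) (y : Y), ‖⟪ι y, φ n⟫‖ ≤ ε n * ‖y‖ := by
  classical
  -- the frame vectors are uniformly bounded by √B
  have hφsq : ∀ n, ‖φ n‖ ^ 2 ≤ B := by
    intro n
    have h1 : ‖⟪φ n, φ n⟫‖ ^ 2 ≤ ∑' m, ‖⟪φ n, φ m⟫‖ ^ 2 :=
      Summable.le_tsum (hsum (φ n)) n fun m _ => sq_nonneg _
    have h2 := (hframe (φ n)).2
    have h3 : ‖⟪φ n, φ n⟫‖ = ‖φ n‖ ^ 2 := by
      rw [inner_self_eq_norm_sq_to_K]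
      simp [sq_abs]
    rw [h3] at h1
    nlinarith [sq_nonneg (‖φ n‖), sq_nonneg (‖φ n‖ ^ 2 - B), norm_nonneg (φ n)]
  have hφ : ∀ n, ‖φ n‖ ≤ Real.sqrt B :=
    fun n => Real.le_sqrt_of_sq_le (hφsq n)
  -- pointwise decay of the frame coefficients
  have hpt : ∀ x : H, Tendsto (fun n => ‖⟪x, φ n⟫‖) atTop (𝓝 0) := by
    intro x
    have h := (hsum x).tendsto_atTop_zero
    have h2 : Tendsto (fun n => Real.sqrt (‖⟪x, φ n⟫‖ ^ 2)) atTop (𝓝 (Real.sqrt 0)) :=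
      (Real.continuous_sqrt.tendsto 0).comp h
    simpa [Real.sqrt_sq_eq_abs] using h2
  -- the coefficient functionals
  set T : ℕ → Y →L[ℂ] ℂ := fun n => (innerSL ℂ (φ n)).comp ι with hTdef
  have hTy : ∀ (n : ℕ) (y : Y), ‖⟪ι y, φ n⟫‖ = ‖T n y‖ := by
    intro n y
    simp only [hTdef, ContinuousLinearMap.comp_apply, innerSL_apply_apply]
    exact norm_inner_symm (ι y) (φ n)
  -- operator norms of coefficient functionals tend to zero (compactness)
  have htend : Tendsto (fun n => ‖T n‖) atTop (𝓝 0) := by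
    have hK : IsCompact (closure (ι '' Metric.closedBall (0 : Y) 1)) :=
      hι.isCompact_closure_image_closedBall 1
    have htb : TotallyBounded (ι '' Metric.closedBall (0 : Y) 1) :=
      (hK.totallyBounded).subset subset_closure
    rw [Metric.tendsto_atTop]
    intro δ hδ
    set δ' : ℝ := δ / (2 * (Real.sqrt B + 1)) with hδ'def
    have hsB : (0 : ℝ) ≤ Real.sqrt B := Real.sqrt_nonneg B
    have hδ'pos : 0 < δ' := by positivity
    obtain ⟨t, htfin, htcover⟩ := Metric.totallyBounded_iff.mp htb δ' hδ'pos
    have hev : ∀ᶠ n in atTop, ∀ c ∈ t, ‖⟪c, φ n⟫‖ < δ / 2 := by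
      rw [eventually_all_finite htfin]
      intro c _
      exact (hpt c).eventually (gt_mem_nhds (half_pos hδ))
    obtain ⟨N, hN⟩ := eventually_atTop.mp hev
    refine ⟨N, fun n hn => ?_⟩
    set M : ℝ := Real.sqrt B * δ' + δ / 2 with hMdef
    have hMδ : M < δ := by
      have hne1 : Real.sqrt B + 1 ≠ 0 := by positivity
      have heq : (Real.sqrt B + 1) * δ' = δ / 2 := by
        rw [hδ'def]; field_simp
      have hlt : Real.sqrt B * δ' < δ / 2 := by nlinarith [hδ'pos]
      rw [hMdef]; linarith
    have hTle : ‖T n‖ ≤ M := by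
      refine ContinuousLinearMap.opNorm_le_bound' _ (by positivity) fun y hy => ?_
      set z : Y := ((‖y‖ : ℂ))⁻¹ • y with hzdef
      have hy0 : ‖y‖ ≠ 0 := hy
      have hz1 : ‖z‖ = 1 := by
        rw [hzdef, norm_smul, norm_inv]
        simp only [Complex.norm_real, Real.norm_eq_abs, abs_norm]
        field_simp
      have hzmem : ι z ∈ ι '' Metric.closedBall (0 : Y) 1 :=
        ⟨z, by simp [Metric.mem_closedBall, hz1], rfl⟩
      obtain ⟨c, hct, hcd⟩ : ∃ c ∈ t, ι z ∈ Metric.ball c δ' := by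
        have := htcover hzmem
        simpa using this
      have hbound : ‖T n z‖ ≤ M := by
        have hsplit : (⟪φ n, ι z⟫ : ℂ) = ⟪φ n, ι z - c⟫ + ⟪φ n, c⟫ := by
          rw [← inner_add_right]; simp
        have h1 : ‖(⟪φ n, ι z - c⟫ : ℂ)‖ ≤ Real.sqrt B * δ' := by
          calc ‖(⟪φ n, ι z - c⟫ : ℂ)‖ ≤ ‖φ n‖ * ‖ι z - c‖ := norm_inner_le_norm _ _
            _ ≤ Real.sqrt B * δ' := by
                apply mul_le_mul (hφ n) _ (norm_nonneg _) hsB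
                rw [Metric.mem_ball, dist_eq_norm] at hcd
                exact le_of_lt hcd
        have h2 : ‖(⟪φ n, c⟫ : ℂ)‖ ≤ δ / 2 := by
          rw [norm_inner_symm]
          exact le_of_lt (hN n hn c hct)
        calc ‖T n z‖ = ‖(⟪φ n, ι z⟫ : ℂ)‖ := rfl
          _ = ‖(⟪φ n, ι z - c⟫ : ℂ) + ⟪φ n, c⟫‖ := by rw [← hsplit]
          _ ≤ ‖(⟪φ n, ι z - c⟫ : ℂ)‖ + ‖(⟪φ n, c⟫ : ℂ)‖ := norm_add_le _ _
          _ ≤ Real.sqrt B * δ' + δ / 2 := add_le_add h1 h2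
      have hyz : y = ((‖y‖ : ℂ)) • z := by
        rw [hzdef, smul_smul]
        rw [mul_inv_cancel₀ (by exact_mod_cast hy0)]
        simp
      calc ‖T n y‖ = ‖T n (((‖y‖ : ℂ)) • z)‖ := by rw [← hyz]
        _ = ‖(‖y‖ : ℂ)‖ * ‖T n z‖ := by rw [map_smul, norm_smul]
        _ = ‖y‖ * ‖T n z‖ := by simp
        _ ≤ ‖y‖ * M := by
            exact mul_le_mul_of_nonneg_left hbound (norm_nonneg y)
        _ = M * ‖y‖ := mul_comm _ _
    rw [Real.dist_eq, sub_zero, abs_of_nonneg (norm_nonneg _)]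
    exact lt_of_le_of_lt hTle hMδ
  obtain ⟨ε, hpos, hanti, htend0, hdom⟩ :=
    exists_antitone_dominating (fun n => ‖T n‖) (fun n => norm_nonneg _) htend
  refine ⟨ε, hpos, hanti, htend0, fun n y => ?_⟩
  calc ‖⟪ι y, φ n⟫‖ = ‖T n y‖ := hTy n y
    _ ≤ ‖T n‖ * ‖y‖ := (T n).le_opNorm y
    _ ≤ ε n * ‖y‖ := mul_le_mul_of_nonneg_right (hdom n) (norm_nonneg y)
end
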